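/- For every alphabet size σ ≥ 2 and all integers j ≥ 1 and i ≥ j + 2, the number of unbordered strings S of length i over an alphabet of size σ such that S[1] = S[m] for at least one m with 2 ≤ m ≤ j + 1 is at most (σ−1)·σ^{i−1} − (σ−1)^{j+1}·σ^{i−j−1}. -/

import Mathlib

open List Finset Filter

/-- `S` is unbordered: it has no nonempty proper prefix that is also a suffix. -/
def Unbordered {α : Type*} (S : List α) : Prop :=
  ∀ B : List α, B ≠ [] → B.length < S.length → B <+: S → ¬ B <:+ S

/-- The length of the maximal unbordered factor of `S`. -/
noncomputable def muf {α : Type*} (S : List α) : ℕ :=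
  sSup {k | ∃ F : List α, F <:+: S ∧ Unbordered F ∧ F.length = k}

lemma card_filter_pi {n m : ℕ} (s : Fin n → Finset (Fin m)) :
    (Finset.univ.filter (fun f : Fin n → Fin m => ∀ t, f t ∈ s t)).card = ∏ t, (s t).card := by
  classical
  rw [← Fintype.card_subtype]
  rw [Fintype.card_congr (Equiv.subtypePiEquivPi (p := fun t b => b ∈ s t))]
  simp

lemma card_filter_val {i : ℕ} (P : ℕ → Prop) [DecidablePred P] :
    (Finset.univ.filter (fun t : Fin i => P t.val)).card
      = ((Finset.range i).filter P).card := by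
  simp only [Finset.card_filter]
  exact Fin.sum_univ_eq_sum_range (fun v => if P v then 1 else 0) i

lemma prod_if3 {n : ℕ} (p q : Fin n → Prop) [DecidablePred p] [DecidablePred q] (a b c : ℕ) :
    ∏ t : Fin n, (if p t then a else if q t then b else c)
      = a ^ (univ.filter (fun t => p t)).card * (b ^ (univ.filter (fun t => ¬ p t ∧ q t)).card
        * c ^ (univ.filter (fun t => ¬ p t ∧ ¬ q t)).card) := by
  rw [Finset.prod_ite, Finset.prod_const, Finset.prod_ite, Finset.prod_const, Finset.prod_const,
    Finset.filter_filter, Finset.filter_filter]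

lemma unb_ne {σ : Type*} {m : ℕ} (hm : 1 ≤ m) (f : Fin (m+1) → σ)
    (hU : Unbordered (List.ofFn f)) : f (Fin.last m) ≠ f 0 := by
  intro heq
  have hpre : [f 0] <+: List.ofFn f := by
    rw [List.ofFn_succ]; exact ⟨_, rfl⟩
  have hsuf : [f 0] <:+ List.ofFn f := by
    rw [← heq, List.ofFn_succ']
    exact ⟨_, List.concat_eq_append.symm⟩
  exact hU [f 0] (by simp) (by simp; omega) hpre hsuf

lemma fiber_count {i m : ℕ} (Qv : ℕ → Prop) [DecidablePred Qv] (a : Fin m) :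
    (univ.filter (fun f : Fin i → Fin m => ∀ t : Fin i,
        f t ∈ (if t.val = 0 then {a} else if Qv t.val then {a}ᶜ else univ : Finset (Fin m)))).card
      = (m - 1) ^ (((Finset.range i).filter (fun v => ¬ v = 0 ∧ Qv v)).card)
        * m ^ (((Finset.range i).filter (fun v => ¬ v = 0 ∧ ¬ Qv v)).card) := by
  classical
  rw [card_filter_pi]
  have h : ∀ t : Fin i,
      ((if t.val = 0 then {a} else if Qv t.val then {a}ᶜ else univ : Finset (Fin m))).card
        = if t.val = 0 then 1 else if Qv t.val then m - 1 else m := by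
    intro t; split_ifs <;> simp [Finset.card_compl]
  rw [Finset.prod_congr rfl (fun t _ => h t)]
  rw [prod_if3 (p := fun t : Fin i => t.val = 0) (q := fun t => Qv t.val)]
  rw [one_pow]
  rw [card_filter_val (P := fun v => ¬ v = 0 ∧ Qv v),
    card_filter_val (P := fun v => ¬ v = 0 ∧ ¬ Qv v), one_mul]

theorem unbordered_with_repeat_upper_bound (σ i j : ℕ) (hσ : 2 ≤ σ) (hj : 1 ≤ j)
    (hi : j + 2 ≤ i) :
    (Nat.card {f : Fin i → Fin σ // Unbordered (List.ofFn f) ∧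
        ∃ k l : Fin i, 1 ≤ (k : ℕ) ∧ (k : ℕ) ≤ j ∧ (l : ℕ) = 0 ∧ f k = f l} : ℝ) ≤
      ((σ : ℝ) - 1) * (σ : ℝ) ^ (i - 1) - ((σ : ℝ) - 1) ^ (j + 1) * (σ : ℝ) ^ (i - j - 1) := by
  classical
  obtain ⟨m, rfl⟩ : ∃ m, i = m + 1 := ⟨i - 1, by omega⟩
  have hm : 1 ≤ m := by omega
  set i := m + 1 with hidef
  set L : Fin i := Fin.last m with hL
  -- the sets
  set P : (Fin i → Fin σ) → Prop := fun f => Unbordered (List.ofFn f) ∧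
      ∃ k l : Fin i, 1 ≤ (k : ℕ) ∧ (k : ℕ) ≤ j ∧ (l : ℕ) = 0 ∧ f k = f l with hP
  set B : Finset (Fin i → Fin σ) := univ.filter (fun f => f L ≠ f 0) with hB
  set C : Finset (Fin i → Fin σ) := univ.filter
      (fun f => f L ≠ f 0 ∧ ∀ k : Fin i, 1 ≤ (k : ℕ) → (k : ℕ) ≤ j → f k ≠ f 0) with hC
  have hCB : C ⊆ B := by
    intro f hf
    simp only [hC, hB, Finset.mem_filter] at *
    exact ⟨hf.1, hf.2.1⟩
  -- step 1: Nat.card = filter card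
  have h1 : Nat.card {f : Fin i → Fin σ // P f} = (univ.filter P).card := by
    rw [Nat.card_eq_fintype_card, Fintype.card_subtype]
  -- step 2: subset
  have h2 : univ.filter P ⊆ B \ C := by
    intro f hf
    simp only [Finset.mem_filter, hP] at hf
    obtain ⟨-, hU, k, l, hk1, hk2, hl, hfk⟩ := hf
    have hne : f L ≠ f 0 := unb_ne hm f hU
    have hl0 : l = 0 := by exact Fin.ext (by simpa using hl)
    rw [hl0] at hfk
    simp only [Finset.mem_sdiff, hB, hC, Finset.mem_filter, Finset.mem_univ, true_and,
      not_and, not_forall]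
    exact ⟨hne, fun _ => ⟨k, hk1, hk2, by simpa using hfk⟩⟩
  -- step 3: card B
  have hcardB : B.card = (σ - 1) * σ ^ (i - 1) := by
    rw [Finset.card_eq_sum_card_fiberwise (f := fun f => f 0) (t := univ) (fun _ _ => mem_univ _)]
    have hfib : ∀ a : Fin σ, (B.filter (fun f => f 0 = a)).card
        = (σ - 1) ^ 1 * σ ^ (i - 2) := by
      intro a
      have hset : B.filter (fun f => f 0 = a) = univ.filter (fun f : Fin i → Fin σ =>
          ∀ t : Fin i, f t ∈ (if t.val = 0 then {a} else if t.val = i - 1 then {a}ᶜ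
            else univ : Finset (Fin σ))) := by
        ext f
        simp only [hB, Finset.filter_filter, Finset.mem_filter, Finset.mem_univ, true_and]
        constructor
        · rintro ⟨hne, h0⟩ t
          split_ifs with ht1 ht2
          · have : t = 0 := Fin.ext (by simpa using ht1)
            simp [this, h0]
          · have : t = L := Fin.ext (by simp [hL]; omega)
            simp only [this, Finset.mem_compl, Finset.mem_singleton]
            rw [← h0]; exact hne
          · simp
        · intro h
          have h0 : f 0 = a := by simpa using h 0
          have hLm := h L
          have hLv : (L : ℕ) = i - 1 := by simp [hL]; omega
          have hLnz : ¬ (L : ℕ) = 0 := by omega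
          rw [if_neg hLnz, if_pos hLv] at hLm
          simp only [Finset.mem_compl, Finset.mem_singleton] at hLm
          exact ⟨by rw [h0]; exact hLm, h0⟩
      rw [hset, fiber_count (Qv := fun v => v = i - 1) a]
      congr 1
      · congr 1
        have : (Finset.range i).filter (fun v => ¬ v = 0 ∧ v = i - 1) = {i - 1} := by
          ext v; simp only [Finset.mem_filter, Finset.mem_range, Finset.mem_singleton]; omega
        rw [this, Finset.card_singleton]
      · congr 1
        have : (Finset.range i).filter (fun v => ¬ v = 0 ∧ ¬ v = i - 1)
            = Finset.Ioo 0 (i - 1) := by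
          ext v; simp only [Finset.mem_filter, Finset.mem_range, Finset.mem_Ioo]; omega
        rw [this, Nat.card_Ioo]; omega
    rw [Finset.sum_congr rfl (fun a _ => hfib a), Finset.sum_const, smul_eq_mul,
      Finset.card_univ, Fintype.card_fin, pow_one]
    have : i - 1 = (i - 2) + 1 := by omega
    rw [this, pow_succ]; ring
  -- step 4: card C
  have hcardC : C.card = (σ - 1) ^ (j + 1) * σ ^ (i - j - 1) := by
    rw [Finset.card_eq_sum_card_fiberwise (f := fun f => f 0) (t := univ) (fun _ _ => mem_univ _)]
    have hfib : ∀ a : Fin σ, (C.filter (fun f => f 0 = a)).card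
        = (σ - 1) ^ (j + 1) * σ ^ (i - j - 2) := by
      intro a
      have hset : C.filter (fun f => f 0 = a) = univ.filter (fun f : Fin i → Fin σ =>
          ∀ t : Fin i, f t ∈ (if t.val = 0 then {a}
            else if (1 ≤ t.val ∧ t.val ≤ j) ∨ t.val = i - 1 then {a}ᶜ
            else univ : Finset (Fin σ))) := by
        ext f
        simp only [hC, Finset.filter_filter, Finset.mem_filter, Finset.mem_univ, true_and]
        constructor
        · rintro ⟨⟨hne, hall⟩, h0⟩ t
          split_ifs with ht1 ht2
          · have : t = 0 := Fin.ext (by simpa using ht1)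
            simp [this, h0]
          · simp only [Finset.mem_compl, Finset.mem_singleton]
            rcases ht2 with ⟨h1, h2⟩ | hEnd
            · rw [← h0]; exact hall t h1 h2
            · have : t = L := Fin.ext (by simp [hL]; omega)
              rw [this, ← h0]; exact hne
          · simp
        · intro h
          have h0 : f 0 = a := by simpa using h 0
          have hLm := h L
          have hLv : (L : ℕ) = i - 1 := by simp [hL]; omega
          have hLnz : ¬ (L : ℕ) = 0 := by omega
          have hLc : (1 ≤ (L : ℕ) ∧ (L : ℕ) ≤ j) ∨ (L : ℕ) = i - 1 := Or.inr hLv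
          rw [if_neg hLnz, if_pos hLc] at hLm
          simp only [Finset.mem_compl, Finset.mem_singleton] at hLm
          refine ⟨⟨by rw [h0]; exact hLm, ?_⟩, h0⟩
          intro k hk1 hk2
          have hknz : ¬ (k : ℕ) = 0 := by omega
          have hkc : (1 ≤ (k : ℕ) ∧ (k : ℕ) ≤ j) ∨ (k : ℕ) = i - 1 := Or.inl ⟨hk1, hk2⟩
          have hkm := h k
          rw [if_neg hknz, if_pos hkc] at hkm
          simp only [Finset.mem_compl, Finset.mem_singleton] at hkm
          rw [h0]; exact hkm
      rw [hset, fiber_count (Qv := fun v => (1 ≤ v ∧ v ≤ j) ∨ v = i - 1) a]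
      congr 1
      · congr 1
        have : (Finset.range i).filter (fun v => ¬ v = 0 ∧ ((1 ≤ v ∧ v ≤ j) ∨ v = i - 1))
            = Finset.Icc 1 j ∪ {i - 1} := by
          ext v
          simp only [Finset.mem_filter, Finset.mem_range, Finset.mem_union, Finset.mem_Icc,
            Finset.mem_singleton]
          omega
        rw [this, Finset.card_union_of_disjoint (by
          simp only [Finset.disjoint_singleton_right, Finset.mem_Icc]; omega)]
        rw [Nat.card_Icc, Finset.card_singleton]; omega
      · congr 1
        have : (Finset.range i).filter (fun v => ¬ v = 0 ∧ ¬ ((1 ≤ v ∧ v ≤ j) ∨ v = i - 1))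
            = Finset.Ioo j (i - 1) := by
          ext v; simp only [Finset.mem_filter, Finset.mem_range, Finset.mem_Ioo]; omega
        rw [this, Nat.card_Ioo]; omega
    rw [Finset.sum_congr rfl (fun a _ => hfib a), Finset.sum_const, smul_eq_mul,
      Finset.card_univ, Fintype.card_fin]
    have : i - j - 1 = (i - j - 2) + 1 := by omega
    rw [this, pow_succ]; ring
  -- combining
  have hmono : (univ.filter P).card ≤ B.card - C.card := by
    calc (univ.filter P).card ≤ (B \ C).card := Finset.card_le_card h2
    _ = B.card - C.card := by rw [Finset.card_sdiff, Finset.inter_eq_left.mpr hCB]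
  have hCleB : C.card ≤ B.card := Finset.card_le_card hCB
  rw [h1]
  have key : ((univ.filter P).card : ℝ) ≤ ((B.card : ℝ) - (C.card : ℝ)) := by
    calc ((univ.filter P).card : ℝ) ≤ ((B.card - C.card : ℕ) : ℝ) := by exact_mod_cast hmono
    _ = (B.card : ℝ) - (C.card : ℝ) := by rw [Nat.cast_sub hCleB]
  refine key.trans_eq ?_
  rw [hcardB, hcardC]
  have h1σ : 1 ≤ σ := by omega
  push_cast [Nat.cast_sub h1σ]
  ring
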